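/- Let d(u,v) = min(|u−v|, 1−|u−v|) denote the periodic distance on [0,1]. Suppose 0 ≤ r_d, 2r_d ≤ r_s ≤ 1/4. Then for every x ∈ [0,1], both of the following integrals over (y,z) ∈ [0,1]² (with respect to Lebesgue measure) equal 4 r_d²: (i) the integral of 1[d(y,z) ≤ r_s]·1[d(x,y) ≤ r_d]·1[d(x,z) ≤ r_d], and (ii) the integral of 1[d(x,y) ≤ r_s]·1[d(x,z) ≤ r_d]·1[d(y,z) ≤ r_d]. (These are the mixed-triangle probabilities in the geometric block model conditioned on any one vertex location, in the regime r_s ≥ 2r_d.) -/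

import Mathlib

open MeasureTheory Set

noncomputable section

/-- The periodic distance on `[0,1]`: `d(u,v) = min(|u-v|, 1-|u-v|)`. -/
def pdist (u v : ℝ) : ℝ := min |u - v| (1 - |u - v|)

lemma pdist_symm (u v : ℝ) : pdist u v = pdist v u := by simp [pdist, abs_sub_comm]

lemma pdist_tri {u v w : ℝ} (hu : u ∈ Icc (0:ℝ) 1) (hv : v ∈ Icc (0:ℝ) 1)
    (hw : w ∈ Icc (0:ℝ) 1) : pdist u w ≤ pdist u v + pdist v w := by
  obtain ⟨hu0, hu1⟩ := hu; obtain ⟨hv0, hv1⟩ := hv; obtain ⟨hw0, hw1⟩ := hw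
  unfold pdist
  rcases abs_cases (u - v) with ⟨h1, h1'⟩ | ⟨h1, h1'⟩ <;>
  rcases abs_cases (v - w) with ⟨h2, h2'⟩ | ⟨h2, h2'⟩ <;>
  rcases abs_cases (u - w) with ⟨h3, h3'⟩ | ⟨h3, h3'⟩ <;>
  rw [h1, h2, h3] <;> simp only [min_def] <;> split_ifs <;> linarith

lemma pdist_cont (z : ℝ) : Continuous fun y : ℝ => pdist z y := by
  unfold pdist
  exact ((continuous_const.sub continuous_id).abs).min
    (continuous_const.sub (continuous_const.sub continuous_id).abs)

lemma pdist_slice {z r : ℝ} (hz : z ∈ Icc (0:ℝ) 1) (hr0 : 0 ≤ r) (hr : r ≤ 1/4) :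
    ∫ y in Icc (0:ℝ) 1, (if pdist z y ≤ r then (1:ℝ) else 0) = 2 * r := by
  obtain ⟨hz0, hz1⟩ := hz
  have hmeas : MeasurableSet {y : ℝ | pdist z y ≤ r} :=
    (isClosed_le (pdist_cont z) continuous_const).measurableSet
  have h1 : ∀ y : ℝ, (if pdist z y ≤ r then (1:ℝ) else 0)
      = Set.indicator {y : ℝ | pdist z y ≤ r} (fun _ => (1:ℝ)) y := by
    intro y; simp [Set.indicator_apply]
  simp_rw [h1]
  rw [MeasureTheory.setIntegral_indicator hmeas, MeasureTheory.setIntegral_const]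
  have key : ∀ y : ℝ, pdist z y ≤ r ↔ (|z - y| ≤ r ∨ 1 - r ≤ |z - y|) := by
    intro y; rw [pdist, min_le_iff, sub_le_comm]
  have hset : Icc (0:ℝ) 1 ∩ {y : ℝ | pdist z y ≤ r}
      = (Icc (0:ℝ) 1 ∩ Icc (z-r) (z+r)) ∪ (Icc 0 (z-1+r) ∪ Icc (z+1-r) 1) := by
    ext y
    simp only [Set.mem_inter_iff, Set.mem_setOf_eq, key, Set.mem_union, Set.mem_Icc,
      abs_le, le_abs, neg_sub]
    constructor
    · rintro ⟨⟨hy0, hy1⟩, (⟨ha, hb⟩ | (hc | hc))⟩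
      · exact Or.inl ⟨⟨hy0, hy1⟩, by constructor <;> linarith⟩
      · exact Or.inr (Or.inl ⟨hy0, by linarith⟩)
      · exact Or.inr (Or.inr ⟨by linarith, hy1⟩)
    · rintro (⟨⟨h01, h02⟩, h03, h04⟩ | (⟨h01, h02⟩ | ⟨h01, h02⟩))
      · exact ⟨⟨h01, h02⟩, Or.inl ⟨by linarith, by linarith⟩⟩
      · exact ⟨⟨h01, by linarith⟩, Or.inr (Or.inl (by linarith))⟩
      · exact ⟨⟨by linarith, h02⟩, Or.inr (Or.inr (by linarith))⟩
  rw [Set.Icc_inter_Icc] at hset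
  have d23 : Disjoint (Icc (0:ℝ) (z-1+r)) (Icc (z+1-r) 1) := by
    rw [Set.disjoint_left]; rintro y ⟨_, hy1⟩ ⟨hy2, _⟩; linarith
  have d1 : Disjoint (Icc (max 0 (z-r)) (min 1 (z+r))) (Icc (0:ℝ) (z-1+r) ∪ Icc (z+1-r) 1) := by
    rw [Set.disjoint_union_right]
    constructor <;> (rw [Set.disjoint_left]; rintro y ⟨hy1, hy2⟩ ⟨hy3, hy4⟩)
    · have := le_trans (le_max_right (0:ℝ) (z-r)) hy1; linarith
    · have := le_trans hy2 (min_le_right (1:ℝ) (z+r)); linarith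
  rw [measureReal_def, hset, measure_union d1 (measurableSet_Icc.union measurableSet_Icc),
    measure_union d23 measurableSet_Icc, Real.volume_Icc, Real.volume_Icc, Real.volume_Icc,
    ENNReal.toReal_add (by finiteness) (by finiteness),
    ENNReal.toReal_add (by finiteness) (by finiteness),
    ENNReal.toReal_ofReal', ENNReal.toReal_ofReal', ENNReal.toReal_ofReal', smul_eq_mul, mul_one]
  simp only [max_def, min_def]
  split_ifs <;> linarith

lemma setIntegral_prod_symm' {α β E : Type*} [MeasurableSpace α] [MeasurableSpace β]
    [NormedAddCommGroup E] [NormedSpace ℝ E] {μ : Measure α} {ν : Measure β}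
    [SigmaFinite μ] [SigmaFinite ν] (f : α × β → E) {s : Set α} {t : Set β}
    (hf : IntegrableOn f (s ×ˢ t) (μ.prod ν)) :
    ∫ z in s ×ˢ t, f z ∂μ.prod ν = ∫ y in t, ∫ x in s, f (x, y) ∂μ ∂ν := by
  simp only [← Measure.prod_restrict s t, IntegrableOn] at hf ⊢
  exact integral_prod_symm f hf

/-- Mixed-triangle probabilities in the geometric block model, conditioned on any
one vertex location, in the regime `r_s ≥ 2 r_d`: both integrals over
`(y,z) ∈ [0,1]²` of `1[d(y,z) ≤ r_s]·1[d(x,y) ≤ r_d]·1[d(x,z) ≤ r_d]` and of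
`1[d(x,y) ≤ r_s]·1[d(x,z) ≤ r_d]·1[d(y,z) ≤ r_d]` equal `4 r_d²`. -/
theorem mixed_triangle_prob_large_rs (rs rd : ℝ) (hrd0 : 0 ≤ rd)
    (h2d : 2 * rd ≤ rs) (hs4 : rs ≤ 1 / 4)
    (x : ℝ) (hx : x ∈ Set.Icc (0 : ℝ) 1) :
    (∫ p in Set.Icc (0 : ℝ) 1 ×ˢ Set.Icc (0 : ℝ) 1,
        (if pdist p.1 p.2 ≤ rs then (1 : ℝ) else 0) *
        (if pdist x p.1 ≤ rd then (1 : ℝ) else 0) *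
        (if pdist x p.2 ≤ rd then (1 : ℝ) else 0)) = 4 * rd ^ 2 ∧
    (∫ p in Set.Icc (0 : ℝ) 1 ×ˢ Set.Icc (0 : ℝ) 1,
        (if pdist x p.1 ≤ rs then (1 : ℝ) else 0) *
        (if pdist x p.2 ≤ rd then (1 : ℝ) else 0) *
        (if pdist p.1 p.2 ≤ rd then (1 : ℝ) else 0)) = 4 * rd ^ 2 := by
  have hrd4 : rd ≤ 1 / 4 := by linarith
  have hprodmeas : MeasurableSet (Icc (0:ℝ) 1 ×ˢ Icc (0:ℝ) 1) :=
    measurableSet_Icc.prod measurableSet_Icc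
  constructor
  · rw [setIntegral_congr_fun hprodmeas
      (g := fun p : ℝ × ℝ => (if pdist x p.1 ≤ rd then (1:ℝ) else 0) *
        (if pdist x p.2 ≤ rd then (1:ℝ) else 0)) ?_]
    · rw [Measure.volume_eq_prod]
      have h := MeasureTheory.setIntegral_prod_mul (μ := volume) (ν := volume)
        (fun y : ℝ => if pdist x y ≤ rd then (1:ℝ) else 0)
        (fun y : ℝ => if pdist x y ≤ rd then (1:ℝ) else 0) (Icc 0 1) (Icc 0 1)
      exact h.trans (by rw [pdist_slice hx hrd0 hrd4]; ring)
    · rintro ⟨y, z⟩ ⟨hy, hz⟩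
      by_cases h1 : pdist x y ≤ rd <;> by_cases h2 : pdist x z ≤ rd <;>
        simp only [h1, h2, if_true, if_false, mul_one, mul_zero, one_mul, zero_mul]
      have hyz : pdist y z ≤ rs := by
        have t := pdist_tri hy hx hz
        rw [pdist_symm y x] at t; linarith
      rw [if_pos hyz]
  · set g : ℝ × ℝ → ℝ := fun p =>
      (if pdist x p.2 ≤ rd then (1:ℝ) else 0) * (if pdist p.1 p.2 ≤ rd then (1:ℝ) else 0)
      with hg
    have hcont : Continuous fun p : ℝ × ℝ => pdist p.1 p.2 := by
      unfold pdist
      exact ((continuous_fst.sub continuous_snd).abs).min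
        (continuous_const.sub (continuous_fst.sub continuous_snd).abs)
    have hcont2 : Continuous fun p : ℝ × ℝ => pdist x p.2 :=
      (pdist_cont x).comp continuous_snd
    have hS : MeasurableSet {p : ℝ × ℝ | pdist x p.2 ≤ rd ∧ pdist p.1 p.2 ≤ rd} :=
      ((isClosed_le hcont2 continuous_const).inter
        (isClosed_le hcont continuous_const)).measurableSet
    have hgind : g = Set.indicator {p : ℝ × ℝ | pdist x p.2 ≤ rd ∧ pdist p.1 p.2 ≤ rd}
        (fun _ => (1:ℝ)) := by
      funext p
      by_cases h1 : pdist x p.2 ≤ rd <;> by_cases h2 : pdist p.1 p.2 ≤ rd <;>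
        simp [hg, Set.indicator_apply, h1, h2]
    have hInt : IntegrableOn g (Icc (0:ℝ) 1 ×ˢ Icc (0:ℝ) 1) (volume.prod volume) := by
      rw [hgind]
      refine Integrable.indicator ?_ hS
      refine (integrableOn_const_iff).mpr (Or.inr ?_)
      rw [Measure.prod_prod, Real.volume_Icc]
      finiteness
    rw [setIntegral_congr_fun hprodmeas (g := g) ?_]
    · rw [Measure.volume_eq_prod, setIntegral_prod_symm' g hInt]
      have inner : EqOn (fun z : ℝ => ∫ y in Icc (0:ℝ) 1, g (y, z))
          (fun z : ℝ => (if pdist x z ≤ rd then (1:ℝ) else 0) * (2 * rd)) (Icc 0 1) := by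
        intro z hz
        simp only [hg]
        have hsy : (fun y : ℝ => if pdist y z ≤ rd then (1:ℝ) else 0)
            = fun y => if pdist z y ≤ rd then (1:ℝ) else 0 := by
          funext y; rw [pdist_symm]
        by_cases h : pdist x z ≤ rd <;>
          simp only [h, if_true, if_false, one_mul, zero_mul]
        · rw [hsy, pdist_slice hz hrd0 hrd4]
        · simp
      rw [setIntegral_congr_fun measurableSet_Icc inner, MeasureTheory.integral_mul_const,
        pdist_slice hx hrd0 hrd4]
      ring
    · rintro ⟨y, z⟩ ⟨hy, hz⟩
      simp only [hg]
      by_cases h1 : pdist x z ≤ rd <;> by_cases h2 : pdist y z ≤ rd <;>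
        simp only [h1, h2, if_true, if_false, mul_one, mul_zero, one_mul, zero_mul]
      have hxy : pdist x y ≤ rs := by
        have t := pdist_tri hx hz hy
        rw [pdist_symm z y] at t; linarith
      rw [if_pos hxy]
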